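/- arXiv:2308.01382 — 4 statements merged into one kernel-verified Lean document; each statement's English description precedes it below -/
import Mathlib

section
/- For finite metric spaces (X, d_X) and (Y, d_Y), the scaled spread of the product space (X × Y, d_X ⊕ d_Y), where (d_X ⊕ d_Y)((x1,y1),(x2,y2)) = d_X(x1,x2) + d_Y(y1,y2), equals the product of the scaled spreads: σ_{d_X ⊕ d_Y}(t) = σ_{d_X}(t) · σ_{d_Y}(t) for all t ≥ 0. -/
/-- The scaled spread of the ℓ¹-product of two finite metric spaces is the
product of the scaled spreads. -/
theorem spread_prod (X Y : Type*) [Fintype X] [Fintype Y]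
    [MetricSpace X] [MetricSpace Y]
    (σX σY σP : ℝ → ℝ)
    (hσX : ∀ t : ℝ, σX t = ∑ x : X, (∑ y : X, Real.exp (-t * dist x y))⁻¹)
    (hσY : ∀ t : ℝ, σY t = ∑ x : Y, (∑ y : Y, Real.exp (-t * dist x y))⁻¹)
    (hσP : ∀ t : ℝ, σP t = ∑ p : X × Y, (∑ q : X × Y,
      Real.exp (-t * (dist p.1 q.1 + dist p.2 q.2)))⁻¹)
    (t : ℝ) (ht : 0 ≤ t) :
    σP t = σX t * σY t := by
  rw [hσX, hσY, hσP, Finset.sum_mul_sum, Fintype.sum_prod_type]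
  refine Finset.sum_congr rfl fun x _ => Finset.sum_congr rfl fun y _ => ?_
  rw [← mul_inv]
  congr 1
  rw [Finset.sum_mul_sum, Fintype.sum_prod_type]
  refine Finset.sum_congr rfl fun a _ => Finset.sum_congr rfl fun b _ => ?_
  rw [← Real.exp_add, mul_add]
end

section
/- The scaled spread of the unit interval [0,1] with the usual metric, defined by σ(t) = ∫₀¹ (∫₀¹ e^{-t|x-y|} dy)^{-1} dx, satisfies σ(t) = arctanh(√(1 - e^{-t}))/√(1 - e^{-t}) for t > 0. -/
open Real MeasureTheory intervalIntegral

/-- The inverse hyperbolic tangent, `arctanh x = (1/2)·ln((1+x)/(1-x))`. -/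
noncomputable def arctanh (x : ℝ) : ℝ := (1 / 2) * Real.log ((1 + x) / (1 - x))

lemma inner_integral (t x : ℝ) (ht : 0 < t) (hx0 : 0 ≤ x) (hx1 : x ≤ 1) :
    (∫ y in (0:ℝ)..1, Real.exp (-t * |x - y|))
      = (2 - Real.exp (-t*x) - Real.exp (-t*(1-x))) / t := by
  have hcont : Continuous fun y : ℝ => Real.exp (-t * |x - y|) := by fun_prop
  have hsplit : (∫ y in (0:ℝ)..1, Real.exp (-t * |x - y|))
      = (∫ y in (0:ℝ)..x, Real.exp (-t * |x - y|))
        + ∫ y in x..(1:ℝ), Real.exp (-t * |x - y|) :=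
    (integral_add_adjacent_intervals (hcont.intervalIntegrable _ _)
      (hcont.intervalIntegrable _ _)).symm
  have h1 : (∫ y in (0:ℝ)..x, Real.exp (-t * |x - y|)) = (1 - Real.exp (-t*x))/t := by
    have heq : Set.EqOn (fun y : ℝ => Real.exp (-t * |x - y|))
        (fun y : ℝ => Real.exp (-t * (x - y))) (Set.uIcc 0 x) := by
      intro y hy
      rw [Set.uIcc_of_le hx0] at hy
      simp only
      rw [abs_of_nonneg (by linarith [hy.2])]
    rw [integral_congr heq]
    have hd : ∀ y ∈ Set.uIcc (0:ℝ) x,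
        HasDerivAt (fun y => Real.exp (-t*(x-y))/t) (Real.exp (-t*(x-y))) y := by
      intro y _
      have h : HasDerivAt (fun y : ℝ => -t*(x-y)) (-t * (-1)) y :=
        (((hasDerivAt_id y).const_sub x)).const_mul (-t)
      have h2 := (h.exp).div_const t
      refine h2.congr_deriv ?_
      field_simp
    rw [integral_eq_sub_of_hasDerivAt hd
      ((continuous_const.mul (continuous_const.sub continuous_id)).rexp.intervalIntegrable _ _)]
    simp
    ring
  have h2 : (∫ y in x..(1:ℝ), Real.exp (-t * |x - y|)) = (1 - Real.exp (-t*(1-x)))/t := by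
    have heq : Set.EqOn (fun y : ℝ => Real.exp (-t * |x - y|))
        (fun y : ℝ => Real.exp (-t * (y - x))) (Set.uIcc x 1) := by
      intro y hy
      rw [Set.uIcc_of_le hx1] at hy
      simp only
      rw [abs_of_nonpos (by linarith [hy.1]), neg_sub]
    rw [integral_congr heq]
    have hd : ∀ y ∈ Set.uIcc x (1:ℝ),
        HasDerivAt (fun y => -Real.exp (-t*(y-x))/t) (Real.exp (-t*(y-x))) y := by
      intro y _
      have h : HasDerivAt (fun y : ℝ => -t*(y-x)) (-t * 1) y :=
        (((hasDerivAt_id y).sub_const x)).const_mul (-t)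
      have h2 := ((h.exp).div_const t).neg
      convert h2 using 1
      · rfl
      · rfl
      · funext z; rw [Pi.neg_apply]; ring
      · field_simp
    rw [integral_eq_sub_of_hasDerivAt hd
      ((continuous_const.mul (continuous_id.sub continuous_const)).rexp.intervalIntegrable _ _)]
    simp
    ring
  rw [hsplit, h1, h2]
  ring

/-- The scaled spread of the unit interval `[0,1]` with the usual metric,
`σ(t) = ∫₀¹ (∫₀¹ e^{-t|x-y|} dy)⁻¹ dx`, equals
`arctanh(√(1-e^{-t}))/√(1-e^{-t})` for `t > 0`. -/
theorem spread_unit_interval (t : ℝ) (ht : 0 < t) :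
    (∫ x in (0:ℝ)..1, (∫ y in (0:ℝ)..1, Real.exp (-t * |x - y|))⁻¹)
      = arctanh (Real.sqrt (1 - Real.exp (-t))) / Real.sqrt (1 - Real.exp (-t)) := by
  set a := Real.exp (-t) with ha
  set s := Real.sqrt (1 - a) with hsdef
  have ha0 : 0 < a := Real.exp_pos _
  have ha1 : a < 1 := by
    rw [ha]; exact Real.exp_lt_one_iff.mpr (by linarith)
  have hs2 : s^2 = 1 - a := Real.sq_sqrt (by linarith)
  have hs0 : 0 < s := Real.sqrt_pos.mpr (by linarith)
  have hs1 : s < 1 := by nlinarith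
  have ha' : a = 1 - s^2 := by linarith
  have hainv : 1/a = Real.exp t := by
    rw [ha, Real.exp_neg]; field_simp
  -- bounds for u = exp (t*x) for x ∈ [0,1]
  have hrm : (1 - s)/a < 1 := by
    rw [div_lt_one ha0]; nlinarith
  have hrp : 1/a < (1 + s)/a := by
    rw [div_lt_div_iff₀ ha0 ha0]; nlinarith
  have h1s2 : (0:ℝ) < 1 - s^2 := by nlinarith
  -- key structural facts about D(x) in terms of u = exp (t*x)
  have key : ∀ x ∈ Set.Icc (0:ℝ) 1,
      0 < Real.exp (t*x) - (1-s)/a ∧ 0 < (1+s)/a - Real.exp (t*x) ∧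
      2 - Real.exp (-t*x) - Real.exp (-t*(1-x)) =
        a * (Real.exp (t*x) - (1-s)/a) * ((1+s)/a - Real.exp (t*x)) / Real.exp (t*x) := by
    intro x hx
    have hu0 : (0:ℝ) < Real.exp (t*x) := Real.exp_pos _
    have hu1 : 1 ≤ Real.exp (t*x) := Real.one_le_exp (by nlinarith [hx.1])
    have hu2 : Real.exp (t*x) ≤ 1/a := by
      rw [hainv]; exact Real.exp_le_exp.mpr (by nlinarith [hx.2])
    have p1 : 0 < Real.exp (t*x) - (1-s)/a := by linarith
    have p2 : 0 < (1+s)/a - Real.exp (t*x) := by linarith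
    refine ⟨p1, p2, ?_⟩
    have hux : Real.exp (-t*x) = (Real.exp (t*x))⁻¹ := by
      rw [show -t*x = -(t*x) by ring, Real.exp_neg]
    have huy : Real.exp (-t*(1-x)) = a * Real.exp (t*x) := by
      rw [show -t*(1-x) = -t + t*x by ring, Real.exp_add, ← ha]
    rw [hux, huy, ha']
    field_simp
    ring
  have hDpos : ∀ x ∈ Set.Icc (0:ℝ) 1,
      0 < 2 - Real.exp (-t*x) - Real.exp (-t*(1-x)) := by
    intro x hx
    obtain ⟨p1, p2, h⟩ := key x hx
    rw [h]
    exact div_pos (mul_pos (mul_pos ha0 p1) p2) (Real.exp_pos _)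
  -- rewrite the integrand using the inner integral
  have hcongr : (∫ x in (0:ℝ)..1, (∫ y in (0:ℝ)..1, Real.exp (-t * |x - y|))⁻¹)
      = ∫ x in (0:ℝ)..1, t / (2 - Real.exp (-t*x) - Real.exp (-t*(1-x))) := by
    apply integral_congr
    intro x hx
    rw [Set.uIcc_of_le (by norm_num : (0:ℝ) ≤ 1)] at hx
    simp only
    rw [inner_integral t x ht hx.1 hx.2, inv_div]
  rw [hcongr]
  -- the antiderivative
  have hderiv : ∀ x ∈ Set.uIcc (0:ℝ) 1,
      HasDerivAt (fun x => (1/(2*s)) * (Real.log (Real.exp (t*x) - (1-s)/a)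
          - Real.log ((1+s)/a - Real.exp (t*x))))
        (t / (2 - Real.exp (-t*x) - Real.exp (-t*(1-x)))) x := by
    intro x hx
    rw [Set.uIcc_of_le (by norm_num : (0:ℝ) ≤ 1)] at hx
    obtain ⟨p1, p2, hDx⟩ := key x hx
    have hu0 : (0:ℝ) < Real.exp (t*x) := Real.exp_pos _
    have hu : HasDerivAt (fun x => Real.exp (t*x)) (Real.exp (t*x) * t) x := by
      have h := ((hasDerivAt_id x).const_mul t).exp
      simp only [id, mul_one] at h
      exact h
    have hl1 := (hu.sub_const ((1-s)/a)).log p1.ne'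
    have hl2 := (hu.const_sub ((1+s)/a)).log p2.ne'
    have hFd := (hl1.sub hl2).const_mul (1/(2*s))
    refine hFd.congr_deriv ?_
    rw [hDx]
    set u := Real.exp (t*x) with hudef
    set P1 := u - (1-s)/a with hP1def
    set P2 := (1+s)/a - u with hP2def
    have hrel : a*P1 + a*P2 = 2*s := by
      rw [hP1def, hP2def]; field_simp; ring
    have hP1 : P1 ≠ 0 := p1.ne'
    have hP2 : P2 ≠ 0 := p2.ne'
    clear_value u P1 P2
    field_simp
    linear_combination hrel
  have hint : IntervalIntegrable
      (fun x => t / (2 - Real.exp (-t*x) - Real.exp (-t*(1-x)))) volume 0 1 := by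
    apply ContinuousOn.intervalIntegrable
    apply ContinuousOn.div continuousOn_const (by fun_prop)
    intro x hx
    rw [Set.uIcc_of_le (by norm_num : (0:ℝ) ≤ 1)] at hx
    exact (hDpos x hx).ne'
  rw [integral_eq_sub_of_hasDerivAt hderiv hint]
  -- evaluate at the endpoints
  have he1 : Real.exp (t*1) = 1/a := by rw [hainv, mul_one]
  have he0 : Real.exp (t*0) = 1 := by rw [mul_zero, Real.exp_zero]
  rw [he1, he0]
  have ea : 1/a - (1-s)/a = s/a := by ring
  have eb : (1+s)/a - 1/a = s/a := by ring
  have ec : 1 - (1-s)/a = s*(1-s)/a := by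
    rw [ha']; field_simp; ring
  have ed : (1+s)/a - 1 = s*(1+s)/a := by
    rw [ha']; field_simp; ring
  rw [ea, eb, ec, ed, sub_self, mul_zero, zero_sub]
  have hpa : (0:ℝ) < s*(1-s)/a := div_pos (mul_pos hs0 (by linarith)) ha0
  have hpb : (0:ℝ) < s*(1+s)/a := div_pos (mul_pos hs0 (by linarith)) ha0
  have hlog : Real.log (s*(1-s)/a) - Real.log (s*(1+s)/a)
      = Real.log ((1-s)/(1+s)) := by
    rw [← Real.log_div hpa.ne' hpb.ne']
    congr 1
    field_simp
  rw [hlog, show (1-s)/(1+s) = ((1+s)/(1-s))⁻¹ by rw [inv_div], Real.log_inv]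
  unfold arctanh
  ring
end

section
/- The function σ(t) = arctanh(√(1 - e^{-t}))/√(1 - e^{-t}) satisfies |σ(t) - (t/2 + ln 2)| → 0 as t → ∞. -/
open Filter Real

/-- The spread of the unit interval,
`σ(t) = arctanh(√(1-e^{-t}))/√(1-e^{-t})`, satisfies
`|σ(t) - (t/2 + ln 2)| → 0` as `t → ∞`. -/
theorem spread_unit_interval_asymptotic :
    Tendsto (fun t : ℝ =>
        |arctanh (Real.sqrt (1 - Real.exp (-t))) / Real.sqrt (1 - Real.exp (-t))
          - (t / 2 + Real.log 2)|) atTop (nhds 0) := by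
  set s : ℝ → ℝ := fun t => Real.sqrt (1 - Real.exp (-t)) with hs_def
  have hs : Tendsto s atTop (nhds 1) := by
    have h1 : Tendsto (fun t : ℝ => 1 - Real.exp (-t)) atTop (nhds 1) := by
      have := Real.tendsto_exp_neg_atTop_nhds_zero
      simpa using tendsto_const_nhds.sub this
    have := (Real.continuous_sqrt.tendsto 1).comp h1
    rw [Real.sqrt_one] at this; exact this
  have hg : Tendsto (fun t : ℝ =>
      Real.log (1 + s t) / s t - Real.log 2 + t * Real.exp (-t) / (2 * (1 + s t) * s t))
      atTop (nhds 0) := by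
    have hA : Tendsto (fun t => Real.log (1 + s t) / s t) atTop (nhds (Real.log 2)) := by
      have hlog : Tendsto (fun t => Real.log (1 + s t)) atTop (nhds (Real.log 2)) := by
        have h2 : Tendsto (fun t => 1 + s t) atTop (nhds 2) := by
          have : (2:ℝ) = 1 + 1 := by norm_num
          rw [this]
          exact tendsto_const_nhds.add hs
        exact ((Real.continuousAt_log (by norm_num)).tendsto).comp h2
      have h := hlog.div hs one_ne_zero; rw [div_one] at h; exact h
    have hB : Tendsto (fun t : ℝ => t * Real.exp (-t) / (2 * (1 + s t) * s t))
        atTop (nhds 0) := by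
      have hnum : Tendsto (fun t : ℝ => t * Real.exp (-t)) atTop (nhds 0) := by
        have := Real.tendsto_pow_mul_exp_neg_atTop_nhds_zero 1
        simpa using this
      have hden : Tendsto (fun t => 2 * (1 + s t) * s t) atTop (nhds 4) := by
        have h2 : Tendsto (fun t => 1 + s t) atTop (nhds 2) := by
          have : (2:ℝ) = 1 + 1 := by norm_num
          rw [this]
          exact tendsto_const_nhds.add hs
        have := (h2.const_mul (2:ℝ)).mul hs
        have h4 : (4:ℝ) = 2 * 2 * 1 := by norm_num
        rw [h4]
        exact this
      have := hnum.div hden (by norm_num)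
      rw [zero_div] at this; exact this
    have := (hA.sub (tendsto_const_nhds (x := Real.log 2))).add hB
    simpa using this
  have heq : ∀ᶠ t : ℝ in atTop,
      Real.log (1 + s t) / s t - Real.log 2 + t * Real.exp (-t) / (2 * (1 + s t) * s t)
      = arctanh (s t) / s t - (t / 2 + Real.log 2) := by
    filter_upwards [eventually_gt_atTop (0:ℝ)] with t ht
    have he : Real.exp (-t) < 1 := by
      rw [Real.exp_lt_one_iff]; linarith
    have hepos : 0 < Real.exp (-t) := Real.exp_pos _
    have h01 : 0 < 1 - Real.exp (-t) := by linarith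
    have hspos : 0 < s t := Real.sqrt_pos.mpr h01
    have hs2 : s t ^ 2 = 1 - Real.exp (-t) := Real.sq_sqrt h01.le
    have hslt : s t < 1 := by
      nlinarith [hs2, hspos]
    have h1s : (0:ℝ) < 1 + s t := by linarith
    have h1s' : (0:ℝ) < 1 - s t := by linarith
    have hfact : (1 - s t) * (1 + s t) = Real.exp (-t) := by nlinarith [hs2]
    have harc : arctanh (s t) = Real.log (1 + s t) + t / 2 := by
      unfold arctanh
      have hdiv : (1 + s t) / (1 - s t) = (1 + s t) ^ 2 / Real.exp (-t) := by
        rw [← hfact]; field_simp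
      rw [hdiv, Real.log_div (by positivity) (by positivity), Real.log_pow,
        Real.log_exp]
      ring
    rw [harc, hfact.symm]
    field_simp
    ring
  have hmain : Tendsto (fun t : ℝ =>
      arctanh (s t) / s t - (t / 2 + Real.log 2)) atTop (nhds 0) :=
    hg.congr' heq
  have := hmain.abs
  simpa using this
end

section
/- The function σ(t) = arctanh(√(1 - e^{-t}))/√(1 - e^{-t}) satisfies ln(σ(t))/ln(t) → 1 as t → ∞; that is, the asymptotic spread dimension of the unit interval is 1. -/
open Filter Real

/-- For `σ(t) = arctanh(√(1-e^{-t}))/√(1-e^{-t})`, the spread of the unit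
interval, `ln(σ(t))/ln(t) → 1` as `t → ∞`: the asymptotic spread dimension of
the unit interval is `1`. -/
theorem spread_dimension_unit_interval :
    Tendsto (fun t : ℝ =>
        Real.log (arctanh (Real.sqrt (1 - Real.exp (-t))) / Real.sqrt (1 - Real.exp (-t)))
          / Real.log t) atTop (nhds 1) := by
  set x : ℝ → ℝ := fun t => Real.sqrt (1 - Real.exp (-t)) with hxdef
  -- x → 1
  have hx1 : Tendsto x atTop (nhds 1) := by
    have h0 : Tendsto (fun t : ℝ => Real.exp (-t)) atTop (nhds 0) :=
      Real.tendsto_exp_neg_atTop_nhds_zero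
    have h1 : Tendsto (fun t : ℝ => 1 - Real.exp (-t)) atTop (nhds 1) := by
      simpa using (tendsto_const_nhds (x := (1:ℝ)) (f := atTop)).sub h0
    have := (Real.continuous_sqrt.tendsto 1).comp h1
    simpa [hxdef, Function.comp_def] using this
  -- log (1 + x t) → log 2
  have hlog2 : Tendsto (fun t => Real.log (1 + x t)) atTop (nhds (Real.log 2)) := by
    have : Tendsto (fun t => 1 + x t) atTop (nhds 2) := by
      simpa [one_add_one_eq_two] using (tendsto_const_nhds (x := (1:ℝ)) (f := atTop)).add hx1
    exact ((Real.continuousAt_log (by norm_num)).tendsto).comp this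
  -- log(1+x t)/t → 0
  have T1 : Tendsto (fun t => Real.log (1 + x t) / t) atTop (nhds 0) :=
    hlog2.div_atTop tendsto_id
  -- (log(1+x)+t/2)/(x t * t) → 1/2
  have h1 : Tendsto (fun t => (Real.log (1 + x t) + t / 2) / (x t * t)) atTop
      (nhds (1 / 2)) := by
    have T2 : Tendsto (fun t => (Real.log (1 + x t) / t + 1 / 2) / x t) atTop
        (nhds (1 / 2)) := by
      have := (T1.add (tendsto_const_nhds (x := (1:ℝ)/2))).div hx1 one_ne_zero
      convert this using 2 <;> norm_num
    refine T2.congr' ?_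
    filter_upwards [eventually_gt_atTop (0 : ℝ)] with t ht
    have hxpos : 0 < x t := Real.sqrt_pos.mpr (by
      simp only [sub_pos]
      exact Real.exp_lt_one_iff.mpr (by linarith))
    field_simp
  have h2 : Tendsto (fun t => Real.log ((Real.log (1 + x t) + t / 2) / (x t * t))) atTop
      (nhds (Real.log (1 / 2))) :=
    ((Real.continuousAt_log (by norm_num)).tendsto).comp h1
  have h3 : Tendsto (fun t =>
      Real.log ((Real.log (1 + x t) + t / 2) / (x t * t)) / Real.log t) atTop (nhds 0) :=
    h2.div_atTop Real.tendsto_log_atTop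
  have h4 : Tendsto (fun t =>
      Real.log ((Real.log (1 + x t) + t / 2) / (x t * t)) / Real.log t + 1) atTop
      (nhds 1) := by
    simpa using h3.add (tendsto_const_nhds (x := (1:ℝ)))
  refine h4.congr' ?_
  filter_upwards [eventually_gt_atTop (1 : ℝ)] with t ht
  have ht0 : 0 < t := by linarith
  have hu1 : Real.exp (-t) < 1 := Real.exp_lt_one_iff.mpr (by linarith)
  have hu0 : 0 < Real.exp (-t) := Real.exp_pos _
  have hxpos : 0 < x t := Real.sqrt_pos.mpr (by linarith)
  have hx2 : (x t) ^ 2 = 1 - Real.exp (-t) := Real.sq_sqrt (by linarith)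
  have hxlt : x t < 1 := by
    nlinarith [hxpos]
  have hlogt : 0 < Real.log t := Real.log_pos ht
  -- arctanh identity
  have harct : arctanh (x t) = Real.log (1 + x t) + t / 2 := by
    have hfrac : (1 + x t) / (1 - x t) = (1 + x t) ^ 2 / Real.exp (-t) := by
      have hx2' : Real.exp (-t) = 1 - (x t) ^ 2 := by linarith
      rw [hx2', div_eq_div_iff (by linarith) (by nlinarith)]
      ring
    rw [arctanh, hfrac, Real.log_div (by positivity) (by positivity),
      Real.log_pow, Real.log_exp]
    push_cast
    ring
  have hnum : 0 < Real.log (1 + x t) + t / 2 := by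
    have : (0:ℝ) ≤ Real.log (1 + x t) := Real.log_nonneg (by linarith)
    linarith
  -- rewrite the main expression
  have key : Real.log (arctanh (x t) / x t) / Real.log t
      = Real.log ((Real.log (1 + x t) + t / 2) / (x t * t)) / Real.log t + 1 := by
    rw [harct]
    rw [Real.log_div (ne_of_gt hnum) (ne_of_gt hxpos),
      Real.log_div (ne_of_gt hnum) (by positivity),
      Real.log_mul (ne_of_gt hxpos) (ne_of_gt ht0)]
    field_simp
    ring
  exact key.symm
end
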